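/- Let B = (b₁,…,bₙ) ∈ ℝ^{d×n} be a basis with Gram–Schmidt orthogonalization b̃₁,…,b̃ₙ and coefficients μ_{i,j}, let α₁,…,αₙ > 0 be reals, and let A : ℝ^d → ℝ^d be the linear map with A b̃ᵢ = b̃ᵢ/αᵢ for all i and A y = y for all y orthogonal to span(b₁,…,bₙ). Then for every y ∈ ℝ^d and every i ∈ {1,…,n}: Π_{{b₁,…,bᵢ}^⊥}(A y) = A·Π_{{b₁,…,bᵢ}^⊥}(y) = A·Π_{{Ab₁,…,Abᵢ}^⊥}(y). In particular, the basis B' := (Ab₁,…,Abₙ) has Gram–Schmidt vectors b̃'ᵢ = b̃ᵢ/αᵢ and Gram–Schmidt coefficients μ'_{i,j} = μ_{i,j} for all i, j. -/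

import Mathlib

open scoped RealInnerProductSpace BigOperators

noncomputable section

/-- The set of integer linear combinations of `B 0, …, B (n-1)`. -/
def zspan {d n : ℕ} (B : Fin n → EuclideanSpace ℝ (Fin d)) : Set (EuclideanSpace ℝ (Fin d)) :=
  {x | ∃ c : Fin n → ℤ, x = ∑ i, (c i : ℝ) • B i}

/-- `L` is a lattice of rank `n`: the ℤ-span of `n` ℝ-linearly independent vectors. -/
def IsLattice {d : ℕ} (L : Set (EuclideanSpace ℝ (Fin d))) (n : ℕ) : Prop :=
  ∃ B : Fin n → EuclideanSpace ℝ (Fin d), LinearIndependent ℝ B ∧ L = zspan B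

/-- The dual set `S* := {w ∈ span_ℝ S : ⟨w,y⟩ ∈ ℤ for all y ∈ S}`. -/
def dualSet {d : ℕ} (S : Set (EuclideanSpace ℝ (Fin d))) : Set (EuclideanSpace ℝ (Fin d)) :=
  {w | w ∈ Submodule.span ℝ S ∧ ∀ y ∈ S, ∃ m : ℤ, ⟪w, y⟫ = (m : ℝ)}

/-- Orthogonal projection onto the orthogonal complement of `span_ℝ S`. -/
def projPerp {d : ℕ} (S : Set (EuclideanSpace ℝ (Fin d))) (x : EuclideanSpace ℝ (Fin d)) : EuclideanSpace ℝ (Fin d) :=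
  ((Submodule.span ℝ S)ᗮ.orthogonalProjectionOnto x : EuclideanSpace ℝ (Fin d))

/-- `det(ℒ) = √(det(BᵀB))`, computed from a basis `B` via its Gram matrix. -/
def gramDet {d n : ℕ} (B : Fin n → EuclideanSpace ℝ (Fin d)) : ℝ :=
  Real.sqrt (Matrix.det (Matrix.of fun i j => ⟪B i, B j⟫))

/-- The Gram–Schmidt orthogonalization `b̃ᵢ = Π_{{b₁,…,b_(i-1)}^⊥}(bᵢ)`. -/
def gsVec {d n : ℕ} (B : Fin n → EuclideanSpace ℝ (Fin d)) (i : Fin n) : EuclideanSpace ℝ (Fin d) :=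
  projPerp (B '' {j | j < i}) (B i)

/-- The Gram–Schmidt coefficients `μ_(i,j) = ⟨b̃ᵢ, bⱼ⟩ / ‖b̃ᵢ‖²`. -/
def mu {d n : ℕ} (B : Fin n → EuclideanSpace ℝ (Fin d)) (i j : Fin n) : ℝ :=
  ⟪gsVec B i, B j⟫ / ‖gsVec B i‖ ^ 2

/-- `B` is an LLL-reduced basis (with parameter δ = 3/4). -/
def IsLLLReduced {d n : ℕ} (B : Fin n → EuclideanSpace ℝ (Fin d)) : Prop :=
  LinearIndependent ℝ B ∧
  (∀ i j : Fin n, i < j → |mu B i j| ≤ 1 / 2) ∧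
  (∀ (i : ℕ) (h : i + 1 < n),
    (3 / 4) * ‖gsVec B ⟨i, Nat.lt_of_succ_lt h⟩‖ ^ 2 ≤
      ‖gsVec B ⟨i + 1, h⟩‖ ^ 2 +
        (mu B ⟨i, Nat.lt_of_succ_lt h⟩ ⟨i + 1, h⟩) ^ 2 * ‖gsVec B ⟨i, Nat.lt_of_succ_lt h⟩‖ ^ 2)

section Aux

variable {d : ℕ} (S T : Set (EuclideanSpace ℝ (Fin d))) (x : EuclideanSpace ℝ (Fin d))

theorem projPerp_mem_orthogonal : projPerp S x ∈ (Submodule.span ℝ S)ᗮ := by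
  exact SetLike.coe_mem _

theorem sub_projPerp_mem : x - projPerp S x ∈ Submodule.span ℝ S := by
  unfold projPerp
  rw [← Submodule.starProjection_apply, Submodule.starProjection_orthogonal_val]
  simpa using Submodule.starProjection_apply_mem (Submodule.span ℝ S) x

theorem projPerp_eq_of {z : EuclideanSpace ℝ (Fin d)} (hz : z ∈ (Submodule.span ℝ S)ᗮ)
    (hxz : x - z ∈ Submodule.span ℝ S) : projPerp S x = z := by
  unfold projPerp
  exact Submodule.eq_starProjection_of_mem_orthogonal hz
    (by rw [Submodule.orthogonal_orthogonal]; exact hxz)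

theorem projPerp_congr (h : Submodule.span ℝ S = Submodule.span ℝ T) :
    projPerp S x = projPerp T x := by
  refine projPerp_eq_of S x ?_ ?_
  · rw [h]; exact projPerp_mem_orthogonal T x
  · rw [h]; exact sub_projPerp_mem T x

theorem mem_orthogonal_span_iff {v : EuclideanSpace ℝ (Fin d)} :
    v ∈ (Submodule.span ℝ S)ᗮ ↔ ∀ u ∈ S, ⟪u, v⟫ = 0 := by
  constructor
  · intro hv u hu
    exact Submodule.inner_right_of_mem_orthogonal (Submodule.subset_span hu) hv
  · intro h
    rw [Submodule.mem_orthogonal]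
    intro u hu
    induction hu using Submodule.span_induction with
    | mem u hu => exact h u hu
    | zero => simp
    | add u w _ _ hu hw => rw [inner_add_left, hu, hw]; ring
    | smul c u _ hu => rw [real_inner_smul_left, hu]; ring

variable {n : ℕ} (B : Fin n → EuclideanSpace ℝ (Fin d))

theorem gsVec_mem_orthogonal (i : Fin n) :
    gsVec B i ∈ (Submodule.span ℝ (B '' {j | j < i}))ᗮ :=
  projPerp_mem_orthogonal _ _

theorem gsVec_mem_span (i : Fin n) :
    gsVec B i ∈ Submodule.span ℝ (B '' {j | j ≤ i}) := by
  have h1 : B i - gsVec B i ∈ Submodule.span ℝ (B '' {j | j < i}) :=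
    sub_projPerp_mem _ _
  have h2 : Submodule.span ℝ (B '' {j | j < i}) ≤ Submodule.span ℝ (B '' {j | j ≤ i}) :=
    Submodule.span_mono (Set.image_mono fun j (hj : j < i) => le_of_lt hj)
  have h3 : B i ∈ Submodule.span ℝ (B '' {j | j ≤ i}) :=
    Submodule.subset_span ⟨i, le_refl i, rfl⟩
  have := Submodule.sub_mem _ h3 (h2 h1)
  simpa using this

theorem gsVec_inner_eq_zero {i j : Fin n} (hij : i ≠ j) :
    ⟪gsVec B i, gsVec B j⟫ = 0 := by
  wlog h : j < i generalizing i j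
  · rw [real_inner_comm]
    exact this hij.symm (lt_of_le_of_ne (not_lt.1 h) (by simpa using hij))
  have h1 : gsVec B j ∈ Submodule.span ℝ (B '' {k | k < i}) := by
    refine Submodule.span_mono (Set.image_mono ?_) (gsVec_mem_span B j)
    exact fun k hk => lt_of_le_of_lt hk h
  rw [real_inner_comm]
  exact Submodule.inner_right_of_mem_orthogonal h1 (gsVec_mem_orthogonal B i)

theorem B_mem_span_gsVec (i : Fin n) :
    B i ∈ Submodule.span ℝ (gsVec B '' {j | j ≤ i}) := by
  apply WellFoundedLT.induction (α := Fin n) i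
  intro i IH
  have h1 : B i - gsVec B i ∈ Submodule.span ℝ (B '' {j | j < i}) :=
    sub_projPerp_mem _ _
  have h2 : Submodule.span ℝ (B '' {j | j < i}) ≤
      Submodule.span ℝ (gsVec B '' {j | j ≤ i}) := by
    rw [Submodule.span_le]
    rintro _ ⟨j, hj, rfl⟩
    refine Submodule.span_mono (Set.image_mono ?_) (IH j hj)
    intro k hk
    simp only [Set.mem_setOf_eq] at hk ⊢
    exact le_of_lt (lt_of_le_of_lt hk hj)
  have h3 : gsVec B i ∈ Submodule.span ℝ (gsVec B '' {j | j ≤ i}) :=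
    Submodule.subset_span ⟨i, le_refl i, rfl⟩
  have := Submodule.add_mem _ h3 (h2 h1)
  simpa using this

def IsLower (S : Set (Fin n)) : Prop := ∀ ⦃j i : Fin n⦄, j ≤ i → i ∈ S → j ∈ S

theorem span_gsVec_eq {S : Set (Fin n)} (hS : IsLower S) :
    Submodule.span ℝ (B '' S) = Submodule.span ℝ (gsVec B '' S) := by
  apply le_antisymm
  · rw [Submodule.span_le]
    rintro _ ⟨j, hj, rfl⟩
    refine Submodule.span_mono (Set.image_mono ?_) (B_mem_span_gsVec B j)
    exact fun k hk => hS hk hj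
  · rw [Submodule.span_le]
    rintro _ ⟨j, hj, rfl⟩
    refine Submodule.span_mono (Set.image_mono ?_) (gsVec_mem_span B j)
    exact fun k hk => hS hk hj

end Aux

theorem stmt16 {d n : ℕ} (B : Fin n → EuclideanSpace ℝ (Fin d)) (hB : LinearIndependent ℝ B)
    (α : Fin n → ℝ) (hαpos : ∀ i, 0 < α i)
    (A : EuclideanSpace ℝ (Fin d) →ₗ[ℝ] EuclideanSpace ℝ (Fin d))
    (hA1 : ∀ i : Fin n, A (gsVec B i) = (α i)⁻¹ • gsVec B i)
    (hA2 : ∀ y ∈ (Submodule.span ℝ (Set.range B))ᗮ, A y = y) :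
    (∀ (y : EuclideanSpace ℝ (Fin d)) (i : Fin n),
      projPerp (B '' {j | j ≤ i}) (A y) = A (projPerp (B '' {j | j ≤ i}) y) ∧
      A (projPerp (B '' {j | j ≤ i}) y) =
        A (projPerp ((fun j => A (B j)) '' {j | j ≤ i}) y)) ∧
    (∀ i : Fin n, gsVec (fun j => A (B j)) i = (α i)⁻¹ • gsVec B i) ∧
    (∀ i j : Fin n, mu (fun j => A (B j)) i j = mu B i j) := by
  classical
  set B' : Fin n → EuclideanSpace ℝ (Fin d) := fun j => A (B j) with hB'def
  have hαne : ∀ i, α i ≠ 0 := fun i => ne_of_gt (hαpos i)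
  have hαine : ∀ i, (α i)⁻¹ ≠ 0 := fun i => inv_ne_zero (hαne i)
  have hlow_lt : ∀ j : Fin n, IsLower {k | k < j} :=
    fun j a b hab hb => lt_of_le_of_lt hab hb
  have hlow_le : ∀ j : Fin n, IsLower {k | k ≤ j} :=
    fun j a b hab hb => le_trans hab hb
  have hgne : ∀ i, gsVec B i ≠ 0 := by
    intro i h0
    have h1 : B i - gsVec B i ∈ Submodule.span ℝ (B '' {j | j < i}) := sub_projPerp_mem _ _
    rw [h0, sub_zero] at h1
    exact hB.notMem_span_image (by simp) h1
  have hWspan : Submodule.span ℝ (Set.range B) = Submodule.span ℝ (Set.range (gsVec B)) := by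
    rw [← Set.image_univ, ← Set.image_univ (f := gsVec B)]
    exact span_gsVec_eq B (fun j i _ _ => trivial)
  have hgW : ∀ i, gsVec B i ∈ Submodule.span ℝ (Set.range B) := by
    intro i
    rw [hWspan]; exact Submodule.subset_span ⟨i, rfl⟩
  have key : ∀ (i : Fin n) (x), ⟪gsVec B i, A x⟫ = (α i)⁻¹ * ⟪gsVec B i, x⟫ := by
    intro i x
    have hW : ∀ w ∈ Submodule.span ℝ (Set.range B),
        ⟪gsVec B i, A w⟫ = (α i)⁻¹ * ⟪gsVec B i, w⟫ := by
      intro w hw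
      rw [hWspan] at hw
      induction hw using Submodule.span_induction with
      | mem u hu =>
        obtain ⟨j, rfl⟩ := hu
        rw [hA1 j, real_inner_smul_right]
        by_cases hij : i = j
        · subst hij; ring
        · rw [gsVec_inner_eq_zero B hij]; ring
      | zero => simp
      | add u v _ _ hu hv => rw [map_add, inner_add_right, hu, hv, inner_add_right]; ring
      | smul c u _ hu => rw [map_smul, real_inner_smul_right, hu, real_inner_smul_right]; ring
    set s := projPerp (Set.range B) x with hs
    have hsW : s ∈ (Submodule.span ℝ (Set.range B))ᗮ := projPerp_mem_orthogonal _ _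
    have hxs : x - s ∈ Submodule.span ℝ (Set.range B) := sub_projPerp_mem _ _
    have hAs : A s = s := hA2 s hsW
    have hgs : ⟪gsVec B i, s⟫ = 0 :=
      Submodule.inner_right_of_mem_orthogonal (hgW i) hsW
    have hAx : A x = A (x - s) + s := by rw [map_sub, hAs]; abel
    rw [hAx, inner_add_right, hW _ hxs, hgs, inner_sub_right, hgs]
    ring
  have hAspan : ∀ (S : Set (Fin n)), IsLower S → ∀ x ∈ Submodule.span ℝ (B '' S),
      A x ∈ Submodule.span ℝ (B '' S) := by
    intro S hS x hx
    rw [span_gsVec_eq B hS] at hx ⊢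
    induction hx using Submodule.span_induction with
    | mem u hu =>
      obtain ⟨j, hj, rfl⟩ := hu
      rw [hA1 j]
      exact Submodule.smul_mem _ _ (Submodule.subset_span ⟨j, hj, rfl⟩)
    | zero => simp
    | add u v _ _ hu hv => rw [map_add]; exact Submodule.add_mem _ hu hv
    | smul c u _ hu => rw [map_smul]; exact Submodule.smul_mem _ _ hu
  have hAorth : ∀ (S : Set (Fin n)), IsLower S → ∀ x ∈ (Submodule.span ℝ (B '' S))ᗮ,
      A x ∈ (Submodule.span ℝ (B '' S))ᗮ := by
    intro S hS x hx
    rw [span_gsVec_eq B hS] at hx ⊢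
    rw [mem_orthogonal_span_iff]
    rintro _ ⟨j, hj, rfl⟩
    have hm : gsVec B j ∈ Submodule.span ℝ (gsVec B '' S) := Submodule.subset_span ⟨j, hj, rfl⟩
    have hz : ⟪gsVec B j, x⟫ = 0 :=
      Submodule.inner_right_of_mem_orthogonal hm hx
    rw [key j x, hz]
    ring
  have hcomm : ∀ (S : Set (Fin n)), IsLower S → ∀ y,
      projPerp (B '' S) (A y) = A (projPerp (B '' S) y) := by
    intro S hS y
    refine projPerp_eq_of _ _ (hAorth S hS _ (projPerp_mem_orthogonal _ _)) ?_
    rw [← map_sub]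
    exact hAspan S hS _ (sub_projPerp_mem _ _)
  have hspanAB : ∀ (S : Set (Fin n)), IsLower S →
      Submodule.span ℝ (B' '' S) = Submodule.span ℝ (B '' S) := by
    intro S hS
    apply le_antisymm
    · rw [Submodule.span_le]
      rintro _ ⟨j, hj, rfl⟩
      exact hAspan S hS _ (Submodule.subset_span ⟨j, hj, rfl⟩)
    · rw [span_gsVec_eq B hS, Submodule.span_le]
      rintro _ ⟨j, hj, rfl⟩
      revert hj
      apply WellFoundedLT.induction (α := Fin n) j
      intro j IH hj
      have h1 : B j - gsVec B j ∈ Submodule.span ℝ (B '' {k | k < j}) := sub_projPerp_mem _ _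
      have h2 : A (B j - gsVec B j) ∈ Submodule.span ℝ (gsVec B '' {k | k < j}) := by
        rw [← span_gsVec_eq B (hlow_lt j)]
        exact hAspan _ (hlow_lt j) _ h1
      have h3 : Submodule.span ℝ (gsVec B '' {k | k < j}) ≤ Submodule.span ℝ (B' '' S) := by
        rw [Submodule.span_le]
        rintro _ ⟨k, hk, rfl⟩
        exact IH k hk (hS (le_of_lt hk) hj)
      have h4 : A (B j) ∈ Submodule.span ℝ (B' '' S) := Submodule.subset_span ⟨j, hj, rfl⟩
      have h5 : A (gsVec B j) ∈ Submodule.span ℝ (B' '' S) := by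
        have h6 := Submodule.sub_mem _ h4 (h3 h2)
        rw [← map_sub] at h6
        have h7 : B j - (B j - gsVec B j) = gsVec B j := by abel
        rwa [h7] at h6
      rw [hA1 j] at h5
      have h8 := Submodule.smul_mem _ (α j) h5
      rwa [smul_smul, mul_inv_cancel₀ (hαne j), one_smul] at h8
  have hgs' : ∀ i : Fin n, gsVec B' i = (α i)⁻¹ • gsVec B i := by
    intro i
    show projPerp (B' '' {j | j < i}) (A (B i)) = (α i)⁻¹ • gsVec B i
    rw [projPerp_congr _ _ _ (hspanAB _ (hlow_lt i)), hcomm _ (hlow_lt i), ← hA1 i]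
    rfl
  refine ⟨?_, hgs', ?_⟩
  · intro y i
    refine ⟨hcomm _ (hlow_le i) y, ?_⟩
    exact congrArg A (projPerp_congr _ _ y (hspanAB _ (hlow_le i)).symm)
  · intro i j
    show ⟪gsVec B' i, B' j⟫ / ‖gsVec B' i‖ ^ 2 = mu B i j
    rw [hgs' i]
    unfold mu
    rw [real_inner_smul_left, norm_smul, Real.norm_eq_abs,
      abs_of_pos (inv_pos.2 (hαpos i)), mul_pow]
    show (α i)⁻¹ * ⟪gsVec B i, A (B j)⟫ / _ = _
    rw [key i (B j)]
    have h9 : (α i)⁻¹ * ((α i)⁻¹ * ⟪gsVec B i, B j⟫) = (α i)⁻¹ ^ 2 * ⟪gsVec B i, B j⟫ := by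
      ring
    rw [h9, mul_div_mul_left _ _ (pow_ne_zero 2 (hαine i))]
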